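/- arXiv:1407.3462 — 4 statements merged into one kernel-verified Lean document; each statement's English description precedes it below -/
import Mathlib

section
/- Let G be a multigraph on n vertices given by a stream of m edge updates (e_i, Δ_i), where E_i(u,v) denotes the multiplicity of edge (u,v) after the first i-1 updates. Then the total number of (weighted) triangles in the final graph, i.e. Σ_{u<v<z} E_{m+1}(u,v)·E_{m+1}(v,z)·E_{m+1}(z,u), equals Σ_{i≤m} Δ_i · Σ_{z∈[n]} E_i(u_i,z)·E_i(v_i,z), where the i-th update is to edge (u_i,v_i) and the graph has no self-loops. -/
open Finset


private lemma key_step {n : ℕ} (F : Fin n → Fin n → ℤ)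
    (hsym : ∀ a b, F a b = F b a) (hdiag : ∀ a, F a a = 0)
    (uu vv : Fin n) (huv : uu < vv) (δ : ℤ) :
    (∑ a : Fin n, ∑ b ∈ univ.filter (fun b => a < b),
        ∑ c ∈ univ.filter (fun c => b < c),
          ((F a b + (if (a = uu ∧ b = vv) ∨ (a = vv ∧ b = uu) then δ else 0)) *
           (F b c + (if (b = uu ∧ c = vv) ∨ (b = vv ∧ c = uu) then δ else 0)) *
           (F c a + (if (c = uu ∧ a = vv) ∨ (c = vv ∧ a = uu) then δ else 0))
           - F a b * F b c * F c a)) =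
      δ * ∑ z : Fin n, F uu z * F vv z := by
  have expand : ∀ a b c : Fin n, a < b → b < c →
      ((F a b + (if (a = uu ∧ b = vv) ∨ (a = vv ∧ b = uu) then δ else 0)) *
       (F b c + (if (b = uu ∧ c = vv) ∨ (b = vv ∧ c = uu) then δ else 0)) *
       (F c a + (if (c = uu ∧ a = vv) ∨ (c = vv ∧ a = uu) then δ else 0))
       - F a b * F b c * F c a)
      = (if a = uu ∧ b = vv then δ * (F b c * F c a) else 0)
        + ((if b = uu ∧ c = vv then δ * (F a b * F c a) else 0)
        + (if a = uu ∧ c = vv then δ * (F a b * F b c) else 0)) := by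
    intro a b c hab hbc
    have hac : a < c := hab.trans hbc
    simp only [Fin.ext_iff, Fin.lt_def] at hab hbc hac huv ⊢
    split_ifs <;> (try ring) <;> (try (exfalso; omega))
  rw [show (∑ a : Fin n, ∑ b ∈ univ.filter (fun b => a < b),
        ∑ c ∈ univ.filter (fun c => b < c),
          ((F a b + (if (a = uu ∧ b = vv) ∨ (a = vv ∧ b = uu) then δ else 0)) *
           (F b c + (if (b = uu ∧ c = vv) ∨ (b = vv ∧ c = uu) then δ else 0)) *
           (F c a + (if (c = uu ∧ a = vv) ∨ (c = vv ∧ a = uu) then δ else 0))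
           - F a b * F b c * F c a)) =
      ∑ a : Fin n, ∑ b ∈ univ.filter (fun b => a < b),
        ∑ c ∈ univ.filter (fun c => b < c),
          ((if a = uu ∧ b = vv then δ * (F b c * F c a) else 0)
        + ((if b = uu ∧ c = vv then δ * (F a b * F c a) else 0)
        + (if a = uu ∧ c = vv then δ * (F a b * F b c) else 0))) from
    sum_congr rfl fun a _ => sum_congr rfl fun b hb => sum_congr rfl fun c hc => by
      simp only [mem_filter, mem_univ, true_and] at hb hc
      exact expand a b c hb hc]
  simp only [sum_add_distrib]
  simp only [ite_and, sum_ite_irrel, sum_const_zero, sum_ite_eq, sum_ite_eq', mem_filter, mem_univ, true_and, if_pos huv, if_true]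
  simp only [sum_filter]
  rw [mul_sum, ← sum_add_distrib, ← sum_add_distrib]
  apply sum_congr rfl
  intro z _
  rcases lt_trichotomy z uu with h1 | rfl | h1
  · rw [if_neg (lt_asymm (h1.trans huv)), if_pos h1, if_neg (lt_asymm h1), hsym z uu]
    ring
  · rw [if_neg (lt_asymm huv), if_neg (lt_irrefl z), if_neg (lt_irrefl z), hdiag]
    ring
  · rcases lt_trichotomy z vv with h2 | rfl | h2
    · rw [if_neg (lt_asymm h2), if_neg (lt_asymm h1), if_pos h1, if_pos h2, hsym z vv]
      ring
    · rw [if_neg (lt_irrefl z), if_neg (lt_asymm h1), if_pos h1, if_neg (lt_irrefl z), hdiag]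
      ring
    · rw [if_pos h2, if_neg (lt_asymm (huv.trans h2)), if_pos h1, if_neg (lt_asymm h2), hsym z uu]
      ring

private lemma key_step' {n : ℕ} (F : Fin n → Fin n → ℤ)
    (hsym : ∀ a b, F a b = F b a) (hdiag : ∀ a, F a a = 0)
    (uu vv : Fin n) (huv : uu ≠ vv) (δ : ℤ) :
    (∑ a : Fin n, ∑ b ∈ univ.filter (fun b => a < b),
        ∑ c ∈ univ.filter (fun c => b < c),
          ((F a b + (if (a = uu ∧ b = vv) ∨ (a = vv ∧ b = uu) then δ else 0)) *
           (F b c + (if (b = uu ∧ c = vv) ∨ (b = vv ∧ c = uu) then δ else 0)) *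
           (F c a + (if (c = uu ∧ a = vv) ∨ (c = vv ∧ a = uu) then δ else 0))
           - F a b * F b c * F c a)) =
      δ * ∑ z : Fin n, F uu z * F vv z := by
  rcases lt_trichotomy uu vv with h | h | h
  · exact key_step F hsym hdiag uu vv h δ
  · exact absurd h huv
  · have hcond : ∀ x y : Fin n,
        ((x = uu ∧ y = vv) ∨ (x = vv ∧ y = uu)) = ((x = vv ∧ y = uu) ∨ (x = uu ∧ y = vv)) :=
      fun x y => propext or_comm
    have hmul : (∑ z : Fin n, F uu z * F vv z) = ∑ z : Fin n, F vv z * F uu z :=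
      sum_congr rfl fun z _ => mul_comm _ _
    rw [hmul]
    simp only [hcond]
    exact key_step F hsym hdiag vv uu h δ

private lemma pairf_eq_pair_iff {α : Type*} [DecidableEq α] {x y z w : α}
    (hxy : x ≠ y) : ({x, y} : Finset α) = {z, w} ↔ (z = x ∧ w = y) ∨ (z = y ∧ w = x) := by
  constructor
  · intro h
    have hz : z ∈ ({x, y} : Finset α) := by rw [h]; simp
    have hw : w ∈ ({x, y} : Finset α) := by rw [h]; simp
    have hx : x ∈ ({z, w} : Finset α) := by rw [← h]; simp
    have hy : y ∈ ({z, w} : Finset α) := by rw [← h]; simp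
    simp only [mem_insert, mem_singleton] at hz hw hx hy
    tauto
  · rintro (⟨rfl, rfl⟩ | ⟨rfl, rfl⟩)
    · rfl
    · exact Finset.pair_comm _ _

/-- For a dynamic graph stream `⟨(e_i, Δ_i)⟩` on vertex set `Fin n`
(with `e_i = (u i, v i)`, no self-loops), letting `E i a b` denote the
multiplicity of edge `{a,b}` after the first `i - 1` updates (so `E (m+1)` is the
final multiplicity function), the weighted triangle count of the final graph
equals `Σ_{i ≤ m} Δ_i · Σ_z E_i(u_i, z) · E_i(v_i, z)`. -/
theorem triangle_count_incremental (n m : ℕ) (u v : Fin m → Fin n)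
    (huv : ∀ i, u i ≠ v i) (Δ : Fin m → ℤ)
    (E : ℕ → Fin n → Fin n → ℤ)
    (hE : ∀ (i : ℕ) (a b : Fin n),
      E i a b = ∑ j ∈ univ.filter (fun j : Fin m =>
        (j : ℕ) + 1 < i ∧ ({u j, v j} : Finset (Fin n)) = {a, b}), Δ j) :
    (∑ a : Fin n, ∑ b ∈ univ.filter (fun b => a < b),
        ∑ c ∈ univ.filter (fun c => b < c),
          E (m + 1) a b * E (m + 1) b c * E (m + 1) c a) =
      ∑ i : Fin m, Δ i * ∑ z : Fin n,
        E ((i : ℕ) + 1) (u i) z * E ((i : ℕ) + 1) (v i) z := by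
  have hsymE : ∀ (k : ℕ) (a b : Fin n), E k a b = E k b a := by
    intro k a b
    rw [hE k a b, hE k b a]
    simp only [Finset.pair_comm a b]
  have hdiagE : ∀ (k : ℕ) (a : Fin n), E k a a = 0 := by
    intro k a
    rw [hE, Finset.filter_false_of_mem, Finset.sum_empty]
    rintro j - ⟨-, hj⟩
    have h1 : u j ∈ ({a, a} : Finset (Fin n)) := by rw [← hj]; simp
    have h2 : v j ∈ ({a, a} : Finset (Fin n)) := by rw [← hj]; simp
    simp only [mem_insert, mem_singleton, or_self] at h1 h2
    exact huv j (h1.trans h2.symm)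
  have hpair : ∀ (i : Fin m) (a b : Fin n),
      (({u i, v i} : Finset (Fin n)) = {a, b}) ↔
        ((a = u i ∧ b = v i) ∨ (a = v i ∧ b = u i)) :=
    fun i a b => pairf_eq_pair_iff (huv i)
  have hstep : ∀ (i : Fin m) (a b : Fin n),
      E ((i : ℕ) + 1 + 1) a b = E ((i : ℕ) + 1) a b +
        (if (a = u i ∧ b = v i) ∨ (a = v i ∧ b = u i) then Δ i else 0) := by
    intro i a b
    rw [hE, hE, sum_filter, sum_filter]
    have hlast : (if (a = u i ∧ b = v i) ∨ (a = v i ∧ b = u i) then Δ i else 0)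
        = ∑ j : Fin m, if j = i then
            (if ({u j, v j} : Finset (Fin n)) = {a, b} then Δ j else 0) else 0 := by
      rw [Finset.sum_ite_eq' univ i]
      simp [hpair i a b]
    rw [hlast, ← sum_add_distrib]
    apply sum_congr rfl
    intro j _
    by_cases hji : j = i
    · subst hji
      simp [show (j : ℕ) + 1 < (j : ℕ) + 1 + 1 from by omega,
        show ¬((j : ℕ) + 1 < (j : ℕ) + 1) from by omega]
    · rw [if_neg hji, add_zero]
      have hv : (j : ℕ) ≠ (i : ℕ) := fun h => hji (Fin.ext h)
      exact if_congr (and_congr_left' (by omega)) rfl rfl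
  let T : ℕ → ℤ := fun k =>
    ∑ a : Fin n, ∑ b ∈ univ.filter (fun b => a < b),
      ∑ c ∈ univ.filter (fun c => b < c), E k a b * E k b c * E k c a
  have hT1 : T 1 = 0 := by
    have hz : ∀ a b : Fin n, E 1 a b = 0 := by
      intro a b
      rw [hE, Finset.filter_false_of_mem, Finset.sum_empty]
      rintro j - ⟨h, -⟩
      omega
    simp only [T, hz, mul_zero, zero_mul, sum_const_zero]
  show T (m + 1) = _
  rw [show T (m + 1) = T 1 + ∑ k ∈ Finset.range m, (T (k + 1 + 1) - T (k + 1)) by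
    rw [Finset.sum_range_sub (fun k => T (k + 1)) m]; ring]
  rw [hT1, zero_add,
    ← Fin.sum_univ_eq_sum_range (fun k => T (k + 1 + 1) - T (k + 1)) m]
  apply sum_congr rfl
  intro i _
  show (∑ a : Fin n, ∑ b ∈ univ.filter (fun b => a < b),
      ∑ c ∈ univ.filter (fun c => b < c),
        E ((i : ℕ) + 1 + 1) a b * E ((i : ℕ) + 1 + 1) b c * E ((i : ℕ) + 1 + 1) c a)
    - (∑ a : Fin n, ∑ b ∈ univ.filter (fun b => a < b),
      ∑ c ∈ univ.filter (fun c => b < c),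
        E ((i : ℕ) + 1) a b * E ((i : ℕ) + 1) b c * E ((i : ℕ) + 1) c a) = _
  simp only [← sum_sub_distrib]
  simp only [hstep i]
  exact key_step' (E ((i : ℕ) + 1)) (hsymE _) (hdiagE _) (u i) (v i) (huv i) (Δ i)
end

section
/- (Tutte–Berge formula) Let G = (V,E) be a finite simple graph. The maximum size of a matching in G equals (1/2) min over U ⊆ V of (|U| - odd(G-U) + |V|). -/
open Finset

/-- A finset of edges of `G` forming a matching: every edge is an edge of `G`,
and distinct edges share no vertex. -/
def IsGraphMatching {V : Type*} (G : SimpleGraph V) (M : Finset (Sym2 V)) : Prop :=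
  (∀ e ∈ M, e ∈ G.edgeSet) ∧
    ∀ e ∈ M, ∀ f ∈ M, e ≠ f → ∀ x : V, x ∈ e → x ∉ f

/-- The number of connected components of odd cardinality of a graph. -/
noncomputable def oddComponentCount {W : Type*} (H : SimpleGraph W) : ℕ :=
  Nat.card {c : H.ConnectedComponent // Odd (Nat.card c.supp)}

namespace TB
variable {V : Type*} [Fintype V] [DecidableEq V]

def IsMF (G : SimpleGraph V) (f : V → V) : Prop :=
  Function.Involutive f ∧ ∀ x, f x ≠ x → G.Adj x (f x)

def msupp (f : V → V) : Finset V := univ.filter (fun x => f x ≠ x)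

@[simp] lemma mem_msupp {f : V → V} {x : V} : x ∈ msupp f ↔ f x ≠ x := by
  simp [msupp]

lemma isMF_id (G : SimpleGraph V) : IsMF G id := ⟨fun _ => rfl, fun x h => absurd rfl h⟩

noncomputable def nuT (G : SimpleGraph V) : ℕ := by
  classical exact ((univ : Finset (V → V)).filter (IsMF G)).sup (fun f => (msupp f).card)

lemma le_nuT {G : SimpleGraph V} {f : V → V} (hf : IsMF G f) : (msupp f).card ≤ nuT G := by
  classical
  rw [nuT]
  exact Finset.le_sup (f := fun f => (msupp f).card) (Finset.mem_filter.mpr ⟨Finset.mem_univ f, hf⟩)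

lemma exists_nuT (G : SimpleGraph V) : ∃ f, IsMF G f ∧ (msupp f).card = nuT G := by
  classical
  obtain ⟨f, hf, hf2⟩ := Finset.exists_mem_eq_sup
    ((univ : Finset (V → V)).filter (IsMF G)) ⟨id, by simp [isMF_id]⟩ (fun f => (msupp f).card)
  exact ⟨f, by simpa using hf, by rw [nuT]; convert hf2.symm⟩

noncomputable def edgesOf (f : V → V) : Finset (Sym2 V) :=
  (msupp f).image (fun x => s(x, f x))

lemma two_mul_card_edgesOf {f : V → V} (hf : Function.Involutive f) :
    2 * (edgesOf f).card = (msupp f).card := by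
  classical
  rw [Finset.card_eq_sum_card_image (fun x => s(x, f x)) (msupp f)]
  rw [← edgesOf, Finset.sum_congr rfl (fun e he => ?_), Finset.sum_const, smul_eq_mul, mul_comm]
  obtain ⟨a, ha, rfl⟩ := Finset.mem_image.mp he
  have hfa : f a ≠ a := by simpa using ha
  have : (msupp f).filter (fun x => s(x, f x) = s(a, f a)) = {a, f a} := by
    ext y
    simp only [Finset.mem_filter, mem_msupp, Finset.mem_insert, Finset.mem_singleton]
    constructor
    · rintro ⟨hy, he⟩
      rw [Sym2.eq_iff] at he
      rcases he with ⟨h1, _⟩ | ⟨h1, _⟩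
      · exact Or.inl h1
      · exact Or.inr h1
    · rintro (rfl | rfl)
      · exact ⟨hfa, rfl⟩
      · refine ⟨by rw [hf a]; exact Ne.symm hfa, ?_⟩
        rw [hf a, Sym2.eq_swap]
  rw [this, Finset.card_insert_of_notMem (by simpa using hfa.symm), Finset.card_singleton]

lemma even_msupp {f : V → V} (hf : Function.Involutive f) : Even (msupp f).card :=
  ⟨(edgesOf f).card, by rw [← two_mul_card_edgesOf hf]; ring⟩


-- edgesOf is a graph matching
lemma isGraphMatching_edgesOf {G : SimpleGraph V} {f : V → V} (hf : IsMF G f) :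
    IsGraphMatching G (edgesOf f) := by
  constructor
  · intro e he
    obtain ⟨a, ha, rfl⟩ := Finset.mem_image.mp he
    exact hf.2 a (by simpa using ha)
  · intro e he e' he' hne x hxe hxe'
    obtain ⟨a, ha, rfl⟩ := Finset.mem_image.mp he
    obtain ⟨b, hb, rfl⟩ := Finset.mem_image.mp he'
    apply hne
    have key : ∀ c : V, ∀ hc : x ∈ s(c, f c), s(c, f c) = s(x, f x) := by
      intro c hc
      rcases Sym2.mem_iff.mp hc with rfl | h
      · rfl
      · rw [h, hf.1 c, Sym2.eq_swap]
    rw [key a hxe, key b hxe']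

-- from graph matching to involution
lemma exists_isMF_of_isGraphMatching {G : SimpleGraph V} {M : Finset (Sym2 V)}
    (hM : IsGraphMatching G M) : ∃ f, IsMF G f ∧ (msupp f).card = 2 * M.card := by
  classical
  -- uniqueness of partner
  have huniq : ∀ x y y' : V, s(x, y) ∈ M → s(x, y') ∈ M → y = y' := by
    intro x y y' hy hy'
    by_contra hne
    have hne2 : s(x, y) ≠ s(x, y') := by
      intro h
      rw [Sym2.eq_iff] at h
      rcases h with ⟨-, h⟩ | ⟨h1, h2⟩
      · exact hne h
      · exact hne (h2.trans h1)
    exact hM.2 _ hy _ hy' hne2 x (by simp) (by simp)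
  set f : V → V := fun x => if h : ∃ y, s(x, y) ∈ M ∧ y ≠ x then h.choose else x with hfdef
  have hspec : ∀ x : V, (∃ y, s(x, y) ∈ M ∧ y ≠ x) → s(x, f x) ∈ M ∧ f x ≠ x := by
    intro x h
    simp only [hfdef, dif_pos h]
    exact h.choose_spec
  have hnospec : ∀ x : V, ¬(∃ y, s(x, y) ∈ M ∧ y ≠ x) → f x = x := by
    intro x h
    simp only [hfdef, dif_neg h]
  have hinv : Function.Involutive f := by
    intro x
    by_cases h : ∃ y, s(x, y) ∈ M ∧ y ≠ x
    · obtain ⟨h1, h2⟩ := hspec x h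
      have h' : ∃ y, s(f x, y) ∈ M ∧ y ≠ f x := ⟨x, by rwa [Sym2.eq_swap], Ne.symm h2⟩
      obtain ⟨h1', h2'⟩ := hspec _ h'
      exact huniq (f x) (f (f x)) x h1' (by rwa [Sym2.eq_swap])
    · rw [hnospec x h, hnospec x h]
  have hadj : ∀ x, f x ≠ x → G.Adj x (f x) := by
    intro x hx
    have h : ∃ y, s(x, y) ∈ M ∧ y ≠ x := by
      by_contra hc
      exact hx (hnospec x hc)
    exact (SimpleGraph.mem_edgeSet G).mp (hM.1 _ (hspec x h).1)
  refine ⟨f, ⟨hinv, hadj⟩, ?_⟩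
  have hedges : edgesOf f = M := by
    apply Finset.ext
    intro e
    constructor
    · intro he
      obtain ⟨a, ha, rfl⟩ := Finset.mem_image.mp he
      have ha' : f a ≠ a := by simpa using ha
      have h : ∃ y, s(a, y) ∈ M ∧ y ≠ a := by
        by_contra hc
        exact ha' (hnospec a hc)
      exact (hspec a h).1
    · intro he
      induction e with
      | _ a b =>
        have hab : a ≠ b := by
          intro h
          subst h
          exact (G.not_isDiag_of_mem_edgeSet (hM.1 _ he)) (by simp)
        have h : ∃ y, s(a, y) ∈ M ∧ y ≠ a := ⟨b, he, hab.symm⟩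
        have hfa : f a = b := huniq a (f a) b (hspec a h).1 he
        exact Finset.mem_image.mpr ⟨a, mem_msupp.mpr (hspec a h).2, by rw [hfa]⟩
  rw [← hedges, ← two_mul_card_edgesOf hinv]

-- helper: even card of finset with fixed-point-free involution on it
lemma even_card_of_invol {α : Type*} [Fintype α] [DecidableEq α] (T : Finset α) (g : α → α)
    (hclosed : ∀ x ∈ T, g x ∈ T) (hinv : ∀ x ∈ T, g (g x) = x) (hne : ∀ x ∈ T, g x ≠ x) :
    Even T.card := by
  classical
  set g' : α → α := fun x => if x ∈ T then g x else x with hg'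
  have hinv' : Function.Involutive g' := by
    intro x
    by_cases hx : x ∈ T
    · simp only [hg', if_pos hx, if_pos (hclosed x hx)]
      exact hinv x hx
    · simp only [hg', if_neg hx, if_neg hx]
  have : msupp g' = T := by
    ext x
    by_cases hx : x ∈ T
    · simp only [mem_msupp, hg', if_pos hx]
      exact iff_of_true (hne x hx) hx
    · simp only [mem_msupp, hg', if_neg hx]
      exact iff_of_false (fun h => h rfl) hx
  have he := two_mul_card_edgesOf hinv'  -- uses evenness
  rw [this] at he
  exact ⟨(edgesOf g').card, by rw [← he]; ring⟩


-- extension of matching on induced subgraph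
lemma extend_isMF {G : SimpleGraph V} {s : Set V} [Fintype ↥s] [DecidableEq ↥s]
    {f' : ↥s → ↥s} (h : IsMF (G.induce s) f') :
    ∃ f : V → V, IsMF G f ∧ (msupp f).card = (msupp f').card ∧ ∀ x, x ∉ s → f x = x := by
  classical
  set f : V → V := fun x => if hx : x ∈ s then ↑(f' ⟨x, hx⟩) else x with hfdef
  have hin : ∀ (x : V) (hx : x ∈ s), f x = ↑(f' ⟨x, hx⟩) := by
    intro x hx; simp only [hfdef, dif_pos hx]
  have hout : ∀ x, x ∉ s → f x = x := by
    intro x hx; simp only [hfdef, dif_neg hx]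
  have hinv : Function.Involutive f := by
    intro x
    by_cases hx : x ∈ s
    · rw [hin x hx, hin _ (f' ⟨x, hx⟩).2]
      simp [h.1 ⟨x, hx⟩]
    · rw [hout x hx, hout x hx]
  refine ⟨f, ⟨hinv, ?_⟩, ?_, hout⟩
  · intro x hfx
    have hx : x ∈ s := by
      by_contra hc
      exact hfx (hout x hc)
    rw [hin x hx] at hfx ⊢
    have : f' ⟨x, hx⟩ ≠ ⟨x, hx⟩ := fun hc => hfx (by rw [hc])
    exact h.2 ⟨x, hx⟩ this
  · have : msupp f = (msupp f').image (Subtype.val) := by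
      ext x
      simp only [mem_msupp, Finset.mem_image]
      constructor
      · intro hx
        have hxs : x ∈ s := by
          by_contra hc; exact hx (hout x hc)
        refine ⟨⟨x, hxs⟩, ?_, rfl⟩
        intro hc
        rw [hin x hxs, hc] at hx
        exact hx rfl
      · rintro ⟨y, hy, rfl⟩
        rw [hin _ y.2]
        intro hc
        exact hy (Subtype.val_injective (by simpa using hc))
    rw [this, Finset.card_image_of_injective _ Subtype.val_injective]

-- oddComponentCount invariant under iso
lemma oddComponentCount_iso {W W' : Type*} {H : SimpleGraph W} {H' : SimpleGraph W'}
    (φ : H ≃g H') : oddComponentCount H = oddComponentCount H' := by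
  have hmk : ∀ v : W, φ.connectedComponentEquiv (H.connectedComponentMk v)
      = H'.connectedComponentMk (φ v) := fun v => rfl
  have hsupp : ∀ c : H.ConnectedComponent,
      Nat.card c.supp = Nat.card (φ.connectedComponentEquiv c).supp := by
    intro c
    apply Nat.card_congr
    refine Equiv.subtypeEquiv φ.toEquiv (fun x => ?_)
    simp only [SimpleGraph.ConnectedComponent.mem_supp_iff]
    constructor
    · rintro rfl
      exact (hmk x).symm
    · intro hx
      apply φ.connectedComponentEquiv.injective
      rw [hmk x]; exact hx
  apply Nat.card_congr
  exact Equiv.subtypeEquiv φ.connectedComponentEquiv (fun c => by rw [hsupp c])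

-- iso between double induce and single induce
noncomputable def induceInduceIso (G : SimpleGraph V) (s : Set V) (t : Set ↥s) :
    (G.induce s).induce t ≃g G.induce (Subtype.val '' t) where
  toEquiv := Equiv.Set.image Subtype.val t Subtype.val_injective
  map_rel_iff' := by
    intro a b
    simp [Equiv.Set.image, Equiv.Set.imageOfInjOn, SimpleGraph.comap]


lemma easy_bound {G : SimpleGraph V} (U : Finset V) {f : V → V} (hf : IsMF G f) :
    oddComponentCount (G.induce ((↑U : Set V)ᶜ)) + (msupp f).card ≤ U.card + Fintype.card V := by
  classical
  set s : Set V := (↑U : Set V)ᶜ with hs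
  set H := G.induce s with hH
  set exposed : Finset V := univ.filter (fun x => f x = x) with hexp
  have hsplit : (msupp f).card + exposed.card = Fintype.card V := by
    rw [hexp, msupp, ← Finset.card_univ (α := V),
      ← Finset.card_filter_add_card_filter_not (s := univ) (p := fun x => f x ≠ x)]
    congr 2
    apply Finset.filter_congr
    intro x _
    simp [not_not]
  -- key claim
  have claim : ∀ c : H.ConnectedComponent, Odd (Nat.card c.supp) →
      ∃ x : ↥s, x ∈ c.supp ∧ (f ↑x = ↑x ∨ f ↑x ∈ U) := by
    intro c hodd
    haveI : Fintype ↥(c.supp) := Fintype.ofFinite _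
    set T : Finset ↥s := c.supp.toFinset with hT
    have hTcard : T.card = Nat.card c.supp := by
      rw [hT, Set.toFinset_card, Nat.card_eq_fintype_card]
    set g : ↥s → ↥s := fun x => if hx : f ↑x ∈ s then ⟨f ↑x, hx⟩ else x with hg
    set B := T.filter (fun x : ↥s => ¬(f (↑x : V) = ↑x ∨ f ↑x ∈ U)) with hB
    have hmemB : ∀ x : ↥s, x ∈ B ↔ (x ∈ T ∧ f ↑x ≠ ↑x ∧ f ↑x ∉ U) := by
      intro x
      simp only [hB, Finset.mem_filter, not_or, ne_eq]
    have hBs : ∀ x, x ∈ B → f ↑x ∈ s := by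
      intro x hx
      simp only [hs, Set.mem_compl_iff, Finset.mem_coe]
      exact ((hmemB x).mp hx).2.2
    have hBeven : Even B.card := by
      apply even_card_of_invol B g
      · intro x hx
        obtain ⟨hxT, hne, hnU⟩ := (hmemB x).mp hx
        have hgx : g x = ⟨f ↑x, hBs x hx⟩ := by
          rw [hg]; simp only [dif_pos (hBs x hx)]
        rw [hmemB, hgx]
        refine ⟨?_, ?_, ?_⟩
        · -- same component
          rw [hT, Set.mem_toFinset, SimpleGraph.ConnectedComponent.mem_supp_iff] at hxT ⊢
          rw [← hxT]
          apply SimpleGraph.ConnectedComponent.eq.mpr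
          apply SimpleGraph.Adj.reachable
          apply SimpleGraph.Adj.symm
          show H.Adj x ⟨f ↑x, _⟩
          rw [hH]
          exact hf.2 ↑x hne
        · simp only [hf.1 ↑x]
          exact fun hc => hne hc.symm
        · simp only [hf.1 ↑x]
          exact fun hc => (Set.mem_compl (x.2 : (↑x : V) ∈ s)) (by simpa using hc)
      · intro x hx
        have hgx : g x = ⟨f ↑x, hBs x hx⟩ := by
          rw [hg]; simp only [dif_pos (hBs x hx)]
        have h2 : f (f ↑x) ∈ s := by simpa [hf.1 ↑x] using x.2
        rw [hgx, hg]
        simp only [dif_pos h2]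
        exact Subtype.ext (hf.1 ↑x)
      · intro x hx
        have hgx : g x = ⟨f ↑x, hBs x hx⟩ := by
          rw [hg]; simp only [dif_pos (hBs x hx)]
        rw [hgx]
        intro hc
        exact ((hmemB x).mp hx).2.1 (congrArg Subtype.val hc)
    set A := T.filter (fun x : ↥s => f (↑x : V) = ↑x ∨ f ↑x ∈ U) with hA
    have hAB : A.card + B.card = T.card := Finset.card_filter_add_card_filter_not _
    have hoddT : Odd T.card := hTcard ▸ hodd
    have hApos : 0 < A.card := by
      obtain ⟨k, hk⟩ := hBeven
      obtain ⟨m, hm⟩ := hoddT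
      omega
    obtain ⟨x, hx⟩ := Finset.card_pos.mp hApos
    rw [hA, Finset.mem_filter] at hx
    exact ⟨x, by rw [hT, Set.mem_toFinset] at hx; exact hx.1, hx.2⟩
  -- build injection
  have hchoice : ∀ c : {c : H.ConnectedComponent // Odd (Nat.card c.supp)},
      ∃ x : ↥s, x ∈ (c.1).supp ∧ (f ↑x = ↑x ∨ f ↑x ∈ U) := fun c => claim c.1 c.2
  choose a ha1 ha2 using hchoice
  set Φ : {c : H.ConnectedComponent // Odd (Nat.card c.supp)} →
      ({x // x ∈ U} ⊕ {x // x ∈ exposed}) := fun c =>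
    if h : f ↑(a c) ∈ U then Sum.inl ⟨f ↑(a c), h⟩
    else Sum.inr ⟨↑(a c), by
      rw [hexp, Finset.mem_filter]
      exact ⟨Finset.mem_univ _, (ha2 c).resolve_right h⟩⟩ with hΦ
  have hainj : ∀ c c', a c = a c' → c = c' := by
    intro c c' hac
    apply Subtype.ext
    have h1 := (SimpleGraph.ConnectedComponent.mem_supp_iff _ _).mp (ha1 c)
    have h2 := (SimpleGraph.ConnectedComponent.mem_supp_iff _ _).mp (ha1 c')
    rw [← h1, ← h2, hac]
  have hΦinj : Function.Injective Φ := by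
    intro c c' h
    simp only [hΦ] at h
    by_cases h1 : f ↑(a c) ∈ U <;> by_cases h2 : f ↑(a c') ∈ U
    · rw [dif_pos h1, dif_pos h2] at h
      have := Sum.inl.inj h
      have hval : f ↑(a c) = f ↑(a c') := congrArg Subtype.val this
      exact hainj c c' (Subtype.ext (hf.1.injective hval))
    · rw [dif_pos h1, dif_neg h2] at h; exact absurd h (by simp)
    · rw [dif_neg h1, dif_pos h2] at h; exact absurd h (by simp)
    · rw [dif_neg h1, dif_neg h2] at h
      have := Sum.inr.inj h
      have hval : (↑(a c) : V) = ↑(a c') := congrArg (Subtype.val : {x // x ∈ exposed} → V) this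
      exact hainj c c' (Subtype.ext hval)
  have hle := Nat.card_le_card_of_injective Φ hΦinj
  have hcards : Nat.card ({x // x ∈ U} ⊕ {x // x ∈ exposed}) = U.card + exposed.card := by
    rw [Nat.card_sum]
    simp [Nat.card_eq_fintype_card]
  rw [hcards] at hle
  have : oddComponentCount H ≤ U.card + exposed.card := hle
  omega


lemma isMF_swapOn {G : SimpleGraph V} {f g : V → V} (hf : IsMF G f) (hg : IsMF G g)
    (O : Finset V) (hOf : ∀ x ∈ O, f x ∈ O) (hOg : ∀ x ∈ O, g x ∈ O) :
    IsMF G (fun x => if x ∈ O then g x else f x) := by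
  constructor
  · intro x
    by_cases hx : x ∈ O
    · simp only [if_pos hx, if_pos (hOg x hx)]
      exact hg.1 x
    · have : f x ∉ O := fun hc => hx (by rw [← hf.1 x]; exact hOf _ hc)
      simp only [if_neg hx, if_neg this]
      exact hf.1 x
  · intro x
    by_cases hx : x ∈ O
    · simp only [if_pos hx]
      exact hg.2 x
    · simp only [if_neg hx]
      exact hf.2 x

lemma msupp_swapOn (O : Finset V) (f g : V → V) :
    (msupp (fun x => if x ∈ O then g x else f x)).card
      + (O.filter (fun x => f x ≠ x)).card
      = (msupp f).card + (O.filter (fun x => g x ≠ x)).card := by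
  classical
  set h : V → V := fun x => if x ∈ O then g x else f x with hh
  have e1 : (msupp h).filter (fun x => x ∈ O) = O.filter (fun x => g x ≠ x) := by
    ext x
    simp only [Finset.mem_filter, mem_msupp, hh]
    constructor
    · rintro ⟨h1, h2⟩
      rw [if_pos h2] at h1
      exact ⟨h2, h1⟩
    · rintro ⟨h1, h2⟩
      rw [if_pos h1]
      exact ⟨h2, h1⟩
  have e2 : (msupp h).filter (fun x => x ∉ O) = (msupp f).filter (fun x => x ∉ O) := by
    ext x
    simp only [Finset.mem_filter, mem_msupp, hh]
    constructor
    · rintro ⟨h1, h2⟩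
      rw [if_neg h2] at h1
      exact ⟨h1, h2⟩
    · rintro ⟨h1, h2⟩
      rw [if_neg h2]
      exact ⟨h1, h2⟩
  have e3 : (msupp f).filter (fun x => x ∈ O) = O.filter (fun x => f x ≠ x) := by
    ext x
    simp only [Finset.mem_filter, mem_msupp]
    tauto
  have s1 : ((msupp h).filter (fun x => x ∈ O)).card
      + ((msupp h).filter (fun x => ¬ x ∈ O)).card = (msupp h).card :=
    Finset.card_filter_add_card_filter_not _
  have s2 : ((msupp f).filter (fun x => x ∈ O)).card
      + ((msupp f).filter (fun x => ¬ x ∈ O)).card = (msupp f).card :=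
    Finset.card_filter_add_card_filter_not _
  rw [e1, e2] at s1
  rw [e3] at s2
  omega

lemma case2 (G : SimpleGraph V)
    (h2 : ∀ x : V, ∃ g, IsMF G g ∧ (msupp g).card = nuT G ∧ g x = x) :
    ∃ f, IsMF G f ∧ (msupp f).card = nuT G ∧
      ∀ u v, f u = u → f v = v → u ≠ v → ¬ G.Reachable u v := by
  classical
  by_contra hcon
  push_neg at hcon
  set P : ℕ → Prop := fun d => ∃ f u v, IsMF G f ∧ (msupp f).card = nuT G ∧ f u = u ∧ f v = v
    ∧ u ≠ v ∧ G.Reachable u v ∧ G.dist u v = d with hP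
  have hPex : ∃ d, P d := by
    obtain ⟨f0, hf0, hf0m⟩ := exists_nuT G
    obtain ⟨u, v, h1, h2', h3, h4⟩ := hcon f0 hf0 hf0m
    exact ⟨G.dist u v, f0, u, v, hf0, hf0m, h1, h2', h3, h4, rfl⟩
  have hspec := Nat.find_spec hPex
  have hmin : ∀ m, m < Nat.find hPex → ¬ P m := fun m hm => Nat.find_min hPex hm
  set d0 := Nat.find hPex with hd0
  obtain ⟨f, u, v, hf, hfmax, hfu, hfv, huv, hreach, hdist⟩ := hspec
  -- d0 ≥ 2
  have hd2 : 2 ≤ d0 := by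
    by_contra hlt
    push_neg at hlt
    have hcases : d0 = 0 ∨ d0 = 1 := by omega
    rcases hcases with hcase | hcase
    · rw [hcase] at hdist
      exact huv ((hreach.dist_eq_zero_iff).mp hdist)
    · rw [hcase] at hdist
      have hadj : G.Adj u v := SimpleGraph.dist_eq_one_iff_adj.mp hdist
      set f1 : V → V := fun x => if x = u then v else if x = v then u else f x with hf1
      have hfix : ∀ x, x ≠ u → x ≠ v → f1 x = f x := by
        intro x h1 h1'
        simp only [hf1, if_neg h1, if_neg h1']
      have hnotuv : ∀ x, x ≠ u → x ≠ v → f x ≠ u ∧ f x ≠ v := by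
        intro x h1 h1'
        constructor
        · intro hc; exact h1 (by rw [← hf.1 x, hc, hfu])
        · intro hc; exact h1' (by rw [← hf.1 x, hc, hfv])
      have hf1u : f1 u = v := by simp [hf1]
      have hf1v : f1 v = u := by simp [hf1, (G.ne_of_adj hadj).symm]
      have hf1MF : IsMF G f1 := by
        constructor
        · intro x
          by_cases h1 : x = u
          · subst h1; rw [hf1u, hf1v]
          · by_cases h1' : x = v
            · subst h1'; rw [hf1v, hf1u]
            · rw [hfix x h1 h1']
              obtain ⟨e1, e2⟩ := hnotuv x h1 h1'
              rw [hfix _ e1 e2]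
              exact hf.1 x
        · intro x hx
          by_cases h1 : x = u
          · subst h1; rw [hf1u]; exact hadj
          · by_cases h1' : x = v
            · subst h1'; rw [hf1v]; exact hadj.symm
            · rw [hfix x h1 h1'] at hx ⊢
              exact hf.2 x hx
      have hsupp1 : msupp f1 = insert u (insert v (msupp f)) := by
        ext x
        by_cases h1 : x = u
        · subst h1
          exact iff_of_true (mem_msupp.mpr (by rw [hf1u]; exact (G.ne_of_adj hadj).symm))
            (Finset.mem_insert_self _ _)
        · by_cases h1' : x = v
          · subst h1'
            exact iff_of_true (mem_msupp.mpr (by rw [hf1v]; exact G.ne_of_adj hadj))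
              (Finset.mem_insert_of_mem (Finset.mem_insert_self _ _))
          · simp only [mem_msupp, hfix x h1 h1', Finset.mem_insert, h1, h1', false_or]
      have hcard1 : (msupp f1).card = (msupp f).card + 2 := by
        rw [hsupp1, Finset.card_insert_of_notMem, Finset.card_insert_of_notMem]
        · simp [hfv]
        · simp only [Finset.mem_insert, mem_msupp, not_or, not_not]
          exact ⟨G.ne_of_adj hadj, hfu⟩
      have := le_nuT hf1MF
      omega
  -- extract t from a geodesic
  obtain ⟨p, hp⟩ := hreach.exists_walk_length_eq_dist
  cases p with
  | nil => exact huv rfl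
  | @cons _ t _ hadj q =>
    have hql : q.length = d0 - 1 := by
      rw [SimpleGraph.Walk.length_cons, hdist] at hp
      omega
    have htv : G.dist t v ≤ d0 - 1 := hql ▸ SimpleGraph.dist_le q
    have htu : u ≠ t := G.ne_of_adj hadj
    have hdut : G.dist u t = 1 := SimpleGraph.dist_eq_one_iff_adj.mpr hadj
    have htv' : t ≠ v := by
      rintro rfl
      rw [hdut] at hdist
      omega
    have hft : f t ≠ t := by
      intro hc
      exact hmin 1 (by omega)
        ⟨f, u, t, hf, hfmax, hfu, hc, htu, hadj.reachable, hdut⟩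
    -- choose g with max agreement
    set S : Finset (V → V) := univ.filter
      (fun g => IsMF G g ∧ (msupp g).card = nuT G ∧ g t = t) with hS
    have hSne : S.Nonempty := by
      obtain ⟨g0, hg0⟩ := h2 t
      exact ⟨g0, Finset.mem_filter.mpr ⟨Finset.mem_univ _, hg0⟩⟩
    obtain ⟨g, hgS, hgmaxagree⟩ := Finset.exists_max_image S
      (fun g => (univ.filter (fun x => f x = g x)).card) hSne
    obtain ⟨-, hgMF, hgm, hgt⟩ := Finset.mem_filter.mp hgS
    have hgu : g u ≠ u := by
      intro hc
      exact hmin 1 (by omega)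
        ⟨g, u, t, hgMF, hgm, hc, hgt, htu, hadj.reachable, hdut⟩
    have hgv : g v ≠ v := by
      intro hc
      exact hmin (G.dist t v) (by omega)
        ⟨g, t, v, hgMF, hgm, hgt, hc, htv', q.reachable, rfl⟩
    -- the permutation σ = f ∘ g
    set σp : Equiv.Perm V := (hgMF.1.toPerm g).trans (hf.1.toPerm f) with hσp
    have hσ : ∀ x, σp x = f (g x) := fun _ => rfl
    have hσinv : ∀ x, σp.symm x = g (f x) := fun _ => rfl
    set w : ℕ → V := fun i => (⇑σp)^[i] u with hw
    set n := Function.minimalPeriod (⇑σp) u with hn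
    have hperiod : Function.IsPeriodicPt (⇑σp) (orderOf σp) u := by
      show (⇑σp)^[orderOf σp] u = u
      rw [← Equiv.Perm.coe_pow, pow_orderOf_eq_one σp]
      rfl
    have hnpos : 0 < n := hperiod.minimalPeriod_pos (orderOf_pos σp)
    have hwn : w n = u := Function.iterate_minimalPeriod
    have hinj : ∀ i j, i < n → j < n → w i = w j → i = j := by
      intro i j hi hj hij
      exact Function.iterate_injOn_Iio_minimalPeriod hi hj hij
    have hwsucc : ∀ i, w (i + 1) = f (g (w i)) := fun i =>
      Function.iterate_succ_apply' (⇑σp) i u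
    have hn1 : σp u ≠ u := by
      rw [hσ]
      intro hc
      exact hgu (by rw [← hf.1 (g u), hc, hfu])
    have hn2 : 2 ≤ n := by
      rcases Nat.lt_or_ge n 2 with h | h
      · exfalso
        have hn1' : n = 1 := by omega
        apply hn1
        have := hwn
        rw [hn1'] at this
        exact this
      · exact h
    -- formulas
    have hF : ∀ i, i ≤ n → f (w i) = w (n - i) := by
      intro i
      induction i with
      | zero =>
        intro _
        show f u = w (n - 0)
        rw [Nat.sub_zero, hwn, hfu]
      | succ i ih =>
        intro hi
        have hi' : i < n := hi
        have hGi : g (w i) = w (n - 1 - i) := by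
          have e1 : g (w i) = g (f (f (w i))) := by rw [hf.1 (w i)]
          rw [e1, ih hi'.le, ← hσinv]
          have e2 : n - i = (n - i - 1) + 1 := by omega
          rw [e2]
          have e3 : w ((n - i - 1) + 1) = σp (w (n - i - 1)) :=
            Function.iterate_succ_apply' (⇑σp) (n - i - 1) u
          rw [e3, Equiv.symm_apply_apply]
          congr 1
          omega
        rw [hwsucc i, hf.1 (g (w i)), hGi]
        congr 1
        omega
    have hG : ∀ i, i < n → g (w i) = w (n - 1 - i) := by
      intro i hi
      have e1 : f (w (n - i)) = w i := by
        rw [hF (n - i) (by omega)]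
        congr 1
        omega
      rw [← e1, ← hσinv]
      have e2 : n - i = (n - i - 1) + 1 := by omega
      rw [e2]
      have e3 : w ((n - i - 1) + 1) = σp (w (n - i - 1)) :=
        Function.iterate_succ_apply' (⇑σp) (n - i - 1) u
      rw [e3, Equiv.symm_apply_apply]
      congr 1
      omega
    -- the orbit O
    set O : Finset V := (range n).image w with hO
    have hinjOn : Set.InjOn w ↑(range n) := by
      intro i hi j hj hij
      exact hinj i j (by simpa using hi) (by simpa using hj) hij
    have hcardO : O.card = n := by
      rw [hO, Finset.card_image_of_injOn hinjOn, Finset.card_range]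
    have hmemO : ∀ x, x ∈ O ↔ ∃ i, i < n ∧ w i = x := by
      intro x
      simp only [hO, Finset.mem_image, Finset.mem_range]
    have huO : u ∈ O := (hmemO u).mpr ⟨0, hnpos, rfl⟩
    have hfO : ∀ x ∈ O, f x ∈ O := by
      intro x hx
      obtain ⟨i, hi, rfl⟩ := (hmemO x).mp hx
      rw [hF i hi.le]
      rcases Nat.eq_zero_or_pos i with h0 | h0
      · subst h0
        rw [Nat.sub_zero, hwn]
        exact huO
      · exact (hmemO _).mpr ⟨n - i, by omega, rfl⟩
    have hgO : ∀ x ∈ O, g x ∈ O := by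
      intro x hx
      obtain ⟨i, hi, rfl⟩ := (hmemO x).mp hx
      rw [hG i hi]
      exact (hmemO _).mpr ⟨n - 1 - i, by omega, rfl⟩
    -- counting fixed points in O
    have hcount : ∀ (p : V → Prop) (hp : DecidablePred p),
        (O.filter p).card = ((range n).filter (fun i => p (w i))).card := by
      intro p hp
      rw [hO, Finset.filter_image]
      rw [Finset.card_image_of_injOn (hinjOn.mono (fun x hx => by simpa using (Finset.mem_coe.mp (Finset.mem_of_mem_filter x hx))))]
    have hffixchar : ∀ i, i < n → (f (w i) = w i ↔ (i = 0 ∨ i + i = n)) := by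
      intro i hi
      constructor
      · intro h
        rw [hF i hi.le] at h
        rcases Nat.eq_zero_or_pos i with h0 | h0
        · exact Or.inl h0
        · right
          have := hinj (n - i) i (by omega) hi h
          omega
      · rintro (rfl | h)
        · show f (w 0) = w 0
          have : w 0 = u := rfl
          rw [this, hfu]
        · rw [hF i hi.le]
          congr 1
          omega
    have hgfixchar : ∀ i, i < n → (g (w i) = w i ↔ i + i + 1 = n) := by
      intro i hi
      rw [hG i hi]
      constructor
      · intro h
        have := hinj (n - 1 - i) i (by omega) hi h
        omega
      · intro h
        congr 1
        omega
    have hffixcard : (O.filter (fun x => f x = x)).card = if n % 2 = 0 then 2 else 1 := by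
      rw [hcount (fun x => f x = x)]
      have hre : (range n).filter (fun i => f (w i) = w i)
          = (range n).filter (fun i => i = 0 ∨ i + i = n) :=
        Finset.filter_congr (fun i hi => hffixchar i (Finset.mem_range.mp hi))
      rw [hre]
      by_cases hpar : n % 2 = 0
      · rw [if_pos hpar]
        have he : (range n).filter (fun i => i = 0 ∨ i + i = n) = {0, n / 2} := by
          ext i
          simp only [Finset.mem_filter, Finset.mem_range, Finset.mem_insert, Finset.mem_singleton]
          omega
        rw [he, Finset.card_insert_of_notMem (by simp only [Finset.mem_singleton]; omega),
          Finset.card_singleton]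
      · rw [if_neg hpar]
        have he : (range n).filter (fun i => i = 0 ∨ i + i = n) = {0} := by
          ext i
          simp only [Finset.mem_filter, Finset.mem_range, Finset.mem_singleton]
          omega
        rw [he, Finset.card_singleton]
    have hgfixcard : (O.filter (fun x => g x = x)).card = if n % 2 = 0 then 0 else 1 := by
      rw [hcount (fun x => g x = x)]
      have hre : (range n).filter (fun i => g (w i) = w i)
          = (range n).filter (fun i => i + i + 1 = n) :=
        Finset.filter_congr (fun i hi => hgfixchar i (Finset.mem_range.mp hi))
      rw [hre]
      by_cases hpar : n % 2 = 0
      · rw [if_pos hpar]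
        have he : (range n).filter (fun i => i + i + 1 = n) = ∅ := by
          ext i
          simp only [Finset.mem_filter, Finset.mem_range, Finset.notMem_empty, iff_false,
            not_and]
          omega
        rw [he, Finset.card_empty]
      · rw [if_neg hpar]
        have he : (range n).filter (fun i => i + i + 1 = n) = {(n - 1) / 2} := by
          ext i
          simp only [Finset.mem_filter, Finset.mem_range, Finset.mem_singleton]
          omega
        rw [he, Finset.card_singleton]
    have hOsplitf : (O.filter (fun x => f x ≠ x)).card
        + (O.filter (fun x => f x = x)).card = n := by
      have h1 := Finset.card_filter_add_card_filter_not
        (s := O) (p := fun x => f x ≠ x)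
      have h2 : O.filter (fun x => ¬ f x ≠ x) = O.filter (fun x => f x = x) :=
        Finset.filter_congr (fun x _ => not_not)
      rw [h2] at h1
      omega
    have hOsplitg : (O.filter (fun x => g x ≠ x)).card
        + (O.filter (fun x => g x = x)).card = n := by
      have h1 := Finset.card_filter_add_card_filter_not
        (s := O) (p := fun x => g x ≠ x)
      have h2 : O.filter (fun x => ¬ g x ≠ x) = O.filter (fun x => g x = x) :=
        Finset.filter_congr (fun x _ => not_not)
      rw [h2] at h1
      omega
    by_cases hpar : n % 2 = 0
    · -- n even: strictly bigger matching, contradiction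
      have hMF1 := isMF_swapOn hf hgMF O hfO hgO
      have hs1 := msupp_swapOn O f g
      have e1 : (O.filter (fun x => f x = x)).card = 2 := by rw [hffixcard, if_pos hpar]
      have e2 : (O.filter (fun x => g x = x)).card = 0 := by rw [hgfixcard, if_pos hpar]
      have := le_nuT hMF1
      omega
    · -- n odd
      have e1 : (O.filter (fun x => f x = x)).card = 1 := by rw [hffixcard, if_neg hpar]
      have e2 : (O.filter (fun x => g x = x)).card = 1 := by rw [hgfixcard, if_neg hpar]
      set y := w ((n - 1) / 2) with hy
      have hgy : g y = y := (hgfixchar _ (by omega)).mpr (by omega)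
      have hvO : v ∉ O := by
        intro hc
        obtain ⟨i, hi, hwi⟩ := (hmemO v).mp hc
        have := (hffixchar i hi).mpr
        have hfwi : f (w i) = w i := by rw [hwi, hfv]
        rcases (hffixchar i hi).mp hfwi with h0 | h0
        · subst h0
          exact huv (by rw [← hwi]; rfl)
        · omega
      by_cases hyt : y = t
      · -- use swapped matching to contradict minimality of distance
        have hMF1 := isMF_swapOn hf hgMF O hfO hgO
        have hs1 := msupp_swapOn O f g
        have hmax1 : (msupp (fun x => if x ∈ O then g x else f x)).card = nuT G := by omega
        have htO : t ∈ O := by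
          rw [← hyt]
          exact (hmemO y).mpr ⟨(n - 1) / 2, by omega, rfl⟩
        have h1t : (fun x => if x ∈ O then g x else f x) t = t := by
          simp only [if_pos htO]
          exact hgt
        have h1v : (fun x => if x ∈ O then g x else f x) v = v := by
          simp only [if_neg hvO]
          exact hfv
        exact hmin (G.dist t v) (by omega)
          ⟨_, t, v, hMF1, hmax1, h1t, h1v, htv', q.reachable, rfl⟩
      · -- use swapped matching to contradict maximality of agreement
        have hMFk := isMF_swapOn hgMF hf O hgO hfO
        have hsk := msupp_swapOn O g f
        have hmaxk : (msupp (fun x => if x ∈ O then f x else g x)).card = nuT G := by omega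
        have htO : t ∉ O := by
          intro hc
          obtain ⟨i, hi, hwi⟩ := (hmemO t).mp hc
          have hgwi : g (w i) = w i := by rw [hwi, hgt]
          have := (hgfixchar i hi).mp hgwi
          apply hyt
          rw [hy, ← hwi]
          congr 1
          omega
        have hkt : (fun x => if x ∈ O then f x else g x) t = t := by
          simp only [if_neg htO]
          exact hgt
        have hkS : (fun x => if x ∈ O then f x else g x) ∈ S :=
          Finset.mem_filter.mpr ⟨Finset.mem_univ _, hMFk, hmaxk, hkt⟩
        have hsubset : insert u (univ.filter (fun x => f x = g x))
            ⊆ univ.filter (fun x => f x = (fun x => if x ∈ O then f x else g x) x) := by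
          intro x hx
          rcases Finset.mem_insert.mp hx with rfl | hx'
          · simp only [Finset.mem_filter, Finset.mem_univ, true_and, if_pos huO]
          · have hfg : f x = g x := (Finset.mem_filter.mp hx').2
            simp only [Finset.mem_filter, Finset.mem_univ, true_and]
            by_cases hxO : x ∈ O
            · simp only [if_pos hxO]
            · simp only [if_neg hxO]
              exact hfg
        have hnotin : u ∉ univ.filter (fun x => f x = g x) := by
          simp only [Finset.mem_filter, Finset.mem_univ, true_and, hfu]
          exact fun hc => hgu hc.symm
        have hcard := Finset.card_le_card hsubset
        rw [Finset.card_insert_of_notMem hnotin] at hcard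
        have hagree := hgmaxagree _ hkS
        have hbridge : (univ.filter (fun x => f x =
            (fun x => if x ∈ O then f x else g x) x)).card
            = (univ.filter (fun x => f x = if x ∈ O then f x else g x)).card := rfl
        rw [hbridge] at hagree
        omega

universe u

lemma hard_bound : ∀ (n : ℕ) (V : Type u) [Fintype V] [DecidableEq V] (G : SimpleGraph V),
    Fintype.card V = n →
    ∃ U : Finset V, U.card + Fintype.card V
      ≤ nuT G + oddComponentCount (G.induce ((↑U : Set V)ᶜ)) := by
  intro n
  induction n using Nat.strong_induction_on with
  | _ n ih =>
    intro V _ _ G hcard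
    classical
    by_cases hc : ∀ x : V, ∃ g, IsMF G g ∧ (msupp g).card = nuT G ∧ g x = x
    · -- Case 2: every vertex avoidable by a maximum matching
      obtain ⟨f, hf, hfmax, hsep⟩ := case2 G hc
      refine ⟨∅, ?_⟩
      have hset : ((↑(∅ : Finset V) : Set V)ᶜ) = (Set.univ : Set V) := by simp
      rw [hset, oddComponentCount_iso (SimpleGraph.induceUnivIso G)]
      set exposed : Finset V := univ.filter (fun x => f x = x) with hexp
      have hsplit : (msupp f).card + exposed.card = Fintype.card V := by
        rw [hexp, msupp, ← Finset.card_univ (α := V),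
          ← Finset.card_filter_add_card_filter_not (s := univ) (p := fun x => f x ≠ x)]
        congr 2
        apply Finset.filter_congr
        intro x _
        simp [not_not]
      have hodd : ∀ x : V, f x = x → Odd (Nat.card (G.connectedComponentMk x).supp) := by
        intro x hx
        haveI : Fintype ↥((G.connectedComponentMk x).supp) := Fintype.ofFinite _
        set T : Finset V := (G.connectedComponentMk x).supp.toFinset with hT
        have hTcard : T.card = Nat.card (G.connectedComponentMk x).supp := by
          rw [hT, Set.toFinset_card, Nat.card_eq_fintype_card]
        have hAB : (T.filter (fun z => f z = z)).card + (T.filter (fun z => ¬ f z = z)).card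
            = T.card := Finset.card_filter_add_card_filter_not _
        have hBeven : Even (T.filter (fun z => ¬ f z = z)).card := by
          apply even_card_of_invol _ f
          · intro z hz
            obtain ⟨hzT, hzne⟩ := Finset.mem_filter.mp hz
            refine Finset.mem_filter.mpr ⟨?_, ?_⟩
            · rw [hT, Set.mem_toFinset, SimpleGraph.ConnectedComponent.mem_supp_iff] at hzT ⊢
              rw [← hzT]
              exact (SimpleGraph.ConnectedComponent.eq).mpr (hf.2 z hzne).symm.reachable
            · rw [hf.1 z]
              exact fun hc' => hzne hc'.symm
          · intro z _
            exact hf.1 z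
          · intro z hz
            exact (Finset.mem_filter.mp hz).2
        have hA1 : T.filter (fun z => f z = z) = {x} := by
          ext z
          simp only [Finset.mem_filter, Finset.mem_singleton]
          constructor
          · rintro ⟨hzT, hzfix⟩
            rw [hT, Set.mem_toFinset, SimpleGraph.ConnectedComponent.mem_supp_iff] at hzT
            by_contra hne
            exact hsep z x hzfix hx hne ((SimpleGraph.ConnectedComponent.eq).mp hzT)
          · rintro rfl
            refine ⟨?_, hx⟩
            rw [hT, Set.mem_toFinset, SimpleGraph.ConnectedComponent.mem_supp_iff]
        rw [hA1, Finset.card_singleton] at hAB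
        obtain ⟨k, hk⟩ := hBeven
        exact ⟨k, by omega⟩
      have hinj2 : exposed.card ≤ Nat.card {c : G.ConnectedComponent // Odd (Nat.card c.supp)} := by
        have hmem : ∀ x : {x // x ∈ exposed}, f ↑x = ↑x := by
          intro x
          have hx2 : (↑x : V) ∈ univ.filter (fun z => f z = z) := by
            rw [← hexp]; exact x.2
          exact (Finset.mem_filter.mp hx2).2
        have hinj : Function.Injective (fun x : {x // x ∈ exposed} =>
            (⟨G.connectedComponentMk ↑x, hodd ↑x (hmem x)⟩ :
              {c : G.ConnectedComponent // Odd (Nat.card c.supp)})) := by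
          intro x y hxy
          have h1 : G.connectedComponentMk ↑x = G.connectedComponentMk ↑y :=
            congrArg Subtype.val hxy
          have hr : G.Reachable ↑x ↑y := (SimpleGraph.ConnectedComponent.eq).mp h1
          by_contra hne
          exact hsep ↑x ↑y (hmem x) (hmem y)
            (fun hc => hne (Subtype.ext hc)) hr
        calc exposed.card = Nat.card {x // x ∈ exposed} := by
              rw [Nat.card_eq_fintype_card, Fintype.card_coe]
          _ ≤ _ := Nat.card_le_card_of_injective _ hinj
      rw [oddComponentCount] at *
      simp only [Finset.card_empty]
      omega
    · -- Case 1: some vertex covered by every maximum matching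
      push_neg at hc
      obtain ⟨v, hv⟩ := hc
      set s : Set V := {v}ᶜ with hs
      haveI : Fintype ↥s := Fintype.ofFinite _
      have hn1 : 1 ≤ n := by
        rw [← hcard]
        exact Fintype.card_pos_iff.mpr ⟨v⟩
      have hcards : Fintype.card ↥s = n - 1 := by
        have h1 : Fintype.card ↥s = Fintype.card {x : V // ¬ x = v} :=
          Fintype.card_congr (Equiv.subtypeEquivRight (by intro x; simp [hs]))
        rw [h1, Fintype.card_subtype_compl, Fintype.card_subtype_eq, hcard]
      obtain ⟨U', hU'⟩ := ih (n - 1) (by omega) ↥s (G.induce s) hcards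
      have hnuT : nuT (G.induce s) + 2 ≤ nuT G := by
        obtain ⟨f', hf', hf'max⟩ := exists_nuT (G.induce s)
        obtain ⟨f, hfMF, hfcard, hfid⟩ := extend_isMF hf'
        have h1 : (msupp f).card ≤ nuT G := le_nuT hfMF
        have h2 : f v = v := hfid v (fun h => h rfl)
        have h3 : (msupp f).card ≠ nuT G := fun hc' => hv f hfMF hc' h2
        have h4 : Even (msupp f).card := even_msupp hfMF.1
        have h5 : Even (nuT G) := by
          obtain ⟨fm, hfm, hfmc⟩ := exists_nuT G
          rw [← hfmc]
          exact even_msupp hfm.1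
        rw [← hf'max, ← hfcard]
        obtain ⟨k1, hk1⟩ := h4
        obtain ⟨k2, hk2⟩ := h5
        omega
      set U : Finset V := insert v (U'.image Subtype.val) with hU
      have hvnot : v ∉ U'.image Subtype.val := by
        simp only [Finset.mem_image, not_exists, not_and]
        rintro x - hx
        exact x.2 (Set.mem_singleton_iff.mpr hx)
      have hUcard : U.card = U'.card + 1 := by
        rw [hU, Finset.card_insert_of_notMem hvnot,
          Finset.card_image_of_injective _ Subtype.val_injective]
      have hsets : Subtype.val '' ((↑U' : Set ↥s)ᶜ) = ((↑U : Set V)ᶜ) := by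
        ext x
        simp only [Set.mem_image, Set.mem_compl_iff, Finset.mem_coe, hU, Finset.mem_insert,
          Finset.mem_image, not_or, not_exists, not_and]
        constructor
        · rintro ⟨y, hy, rfl⟩
          have hyv : (↑y : V) ≠ v :=
            fun hc => y.2 (Set.mem_singleton_iff.mpr hc)
          refine ⟨hyv, ?_⟩
          rintro z hz hzy
          exact hy (by rwa [Subtype.val_injective hzy] at hz)
        · rintro ⟨hxv, hnex⟩
          have hxs : x ∈ s := fun hmem => hxv (Set.mem_singleton_iff.mp hmem)
          exact ⟨⟨x, hxs⟩, fun hc => hnex ⟨x, hxs⟩ hc rfl, rfl⟩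
      have hodd_eq : oddComponentCount ((G.induce s).induce ((↑U' : Set ↥s)ᶜ))
          = oddComponentCount (G.induce ((↑U : Set V)ᶜ)) := by
        rw [oddComponentCount_iso (induceInduceIso G s ((↑U' : Set ↥s)ᶜ)), hsets]
      refine ⟨U, ?_⟩
      rw [← hodd_eq]
      have hcardV : Fintype.card V = n := hcard
      omega


end TB

/-- Tutte–Berge formula: the maximum size of a matching of a
finite simple graph `G` equals
`(1/2) · min_{U ⊆ V} (|U| - odd(G - U) + |V|)`. -/
theorem tutte_berge_formula {V : Type*} [Fintype V] [DecidableEq V]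
    (G : SimpleGraph V) :
    ∃ M : Finset (Sym2 V), IsGraphMatching G M ∧
      (∀ M' : Finset (Sym2 V), IsGraphMatching G M' → M'.card ≤ M.card) ∧
      (M.card : ℚ) =
        ((univ : Finset (Finset V)).inf' ⟨∅, mem_univ ∅⟩
          (fun U : Finset V => (U.card : ℚ)
            - (oddComponentCount (G.induce ((↑U : Set V)ᶜ)) : ℚ)
            + (Fintype.card V : ℚ))) / 2 := by
  classical
  obtain ⟨f, hf, hfmax⟩ := TB.exists_nuT G
  have h2 := TB.two_mul_card_edgesOf hf.1
  refine ⟨TB.edgesOf f, TB.isGraphMatching_edgesOf hf, ?_, ?_⟩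
  · intro M' hM'
    obtain ⟨f', hf', hcard'⟩ := TB.exists_isMF_of_isGraphMatching hM'
    have h1 := TB.le_nuT hf'
    omega
  · obtain ⟨U0, hU0⟩ := TB.hard_bound (Fintype.card V) V G rfl
    rw [eq_div_iff (by norm_num : (2:ℚ) ≠ 0)]
    have hle1 : ((univ : Finset (Finset V)).inf' ⟨∅, mem_univ ∅⟩
        (fun U : Finset V => (U.card : ℚ)
          - (oddComponentCount (G.induce ((↑U : Set V)ᶜ)) : ℚ)
          + (Fintype.card V : ℚ))) ≤ (TB.nuT G : ℚ) := by
      refine le_trans (Finset.inf'_le _ (mem_univ U0)) ?_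
      have hcast : (U0.card : ℚ) + (Fintype.card V : ℚ)
          ≤ (TB.nuT G : ℚ) + (oddComponentCount (G.induce ((↑U0 : Set V)ᶜ)) : ℚ) := by
        exact_mod_cast hU0
      linarith
    have hle2 : (TB.nuT G : ℚ) ≤ ((univ : Finset (Finset V)).inf' ⟨∅, mem_univ ∅⟩
        (fun U : Finset V => (U.card : ℚ)
          - (oddComponentCount (G.induce ((↑U : Set V)ᶜ)) : ℚ)
          + (Fintype.card V : ℚ))) := by
      apply Finset.le_inf'
      intro U _hU
      have := TB.easy_bound U hf
      have hcast : (oddComponentCount (G.induce ((↑U : Set V)ᶜ)) : ℚ) + (TB.nuT G : ℚ)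
          ≤ (U.card : ℚ) + (Fintype.card V : ℚ) := by
        exact_mod_cast hfmax ▸ this
      linarith
    rw [le_antisymm hle1 hle2]
    have : 2 * (TB.edgesOf f).card = TB.nuT G := by omega
    exact_mod_cast by rw [← this]; push_cast; ring
end

section
/- Let G'₂ be a simple graph whose vertex set is S₁ ∪ S₂ ∪ {v*} with S₁, S₂ disjoint of size n/2 each, whose edges are: (a) some set of edges between S₁ and S₂, and (b) all edges between v* and S₂. Fix u ∈ S₁, let I(u) be the set of edges of G'₂ incident to u, and for a set L of edges joining u to vertices of S₂, let G'₃ be obtained from G'₂ by taking the symmetric difference of its edge set with L ∪ {(u, v*)}. Then G'₃ is bipartite if and only if L = I(u). -/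
/-- Let `G₂` be a simple graph on `S₁ ∪ S₂ ∪ {v*}` (encoded as
`Option (Fin k ⊕ Fin k)`, with `S₁` the left summand, `S₂` the right summand,
`v* = none`, and `k = n/2`), whose edges are some set of edges between `S₁` and
`S₂` together with all edges between `v*` and `S₂`. Fix `u ∈ S₁`, let `I(u)` be
the set of edges of `G₂` incident to `u`, and let `L` be a set of edges joining
`u` to vertices of `S₂`. If `G₃` is obtained from `G₂` by XOR-ing its edge set
with `L ∪ {(u, v*)}`, then `G₃` is bipartite iff `L = I(u)`. -/
theorem xor_bipartite_iff (k : ℕ)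
    (G₂ : SimpleGraph (Option (Fin k ⊕ Fin k)))
    (hstar₂ : ∀ b : Fin k, G₂.Adj none (some (Sum.inr b)))
    (hstar₁ : ∀ a : Fin k, ¬ G₂.Adj none (some (Sum.inl a)))
    (h₁₁ : ∀ a a' : Fin k, ¬ G₂.Adj (some (Sum.inl a)) (some (Sum.inl a')))
    (h₂₂ : ∀ b b' : Fin k, ¬ G₂.Adj (some (Sum.inr b)) (some (Sum.inr b')))
    (u : Fin k)
    (L : Set (Sym2 (Option (Fin k ⊕ Fin k))))
    (hL : ∀ e ∈ L, ∃ b : Fin k,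
      e = s(some (Sum.inl u), some (Sum.inr b))) :
    (SimpleGraph.fromEdgeSet
        (symmDiff G₂.edgeSet (L ∪ {s(some (Sum.inl u), none)}))).Colorable 2 ↔
      L = {e ∈ G₂.edgeSet | (some (Sum.inl u) : Option (Fin k ⊕ Fin k)) ∈ e} := by
  have hIustr : ∀ e ∈ {e ∈ G₂.edgeSet |
      (some (Sum.inl u) : Option (Fin k ⊕ Fin k)) ∈ e},
      ∃ b : Fin k, e = s(some (Sum.inl u), some (Sum.inr b)) := by
    rintro e ⟨he, hmem⟩
    induction e using Sym2.ind with
    | _ x y =>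
      rw [SimpleGraph.mem_edgeSet] at he
      rw [Sym2.mem_iff] at hmem
      rcases hmem with rfl | rfl
      · rcases y with _ | a' | b
        · exact absurd he.symm (hstar₁ u)
        · exact absurd he (h₁₁ u a')
        · exact ⟨b, rfl⟩
      · rcases x with _ | a' | b
        · exact absurd he (hstar₁ u)
        · exact absurd he (h₁₁ a' u)
        · exact ⟨b, Sym2.eq_swap⟩
  have hUnone : ∀ b : Fin k,
      s(some (Sum.inl u), (none : Option (Fin k ⊕ Fin k))) ≠
        s(some (Sum.inl u), some (Sum.inr b)) := by
    intro b h
    rw [Sym2.eq_iff] at h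
    simp at h
  constructor
  · -- forward
    intro hcol
    by_contra hne
    have hex : ∃ e, ¬ (e ∈ L ↔ e ∈ {e ∈ G₂.edgeSet |
        (some (Sum.inl u) : Option (Fin k ⊕ Fin k)) ∈ e}) := by
      by_contra h'
      push_neg at h'
      exact hne (Set.ext h')
    obtain ⟨e, he⟩ := hex
    have hkey : ∃ b : Fin k, s(some (Sum.inl u), some (Sum.inr b)) ∈
        symmDiff G₂.edgeSet (L ∪ {s(some (Sum.inl u), none)}) := by
      by_cases heL : e ∈ L
      · have heI : e ∉ {e ∈ G₂.edgeSet |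
            (some (Sum.inl u) : Option (Fin k ⊕ Fin k)) ∈ e} :=
          fun h => he ⟨fun _ => h, fun _ => heL⟩
        obtain ⟨b, rfl⟩ := hL e heL
        refine ⟨b, Or.inr ⟨Or.inl heL, ?_⟩⟩
        intro hE
        exact heI ⟨hE, by simp⟩
      · have heI : e ∈ {e ∈ G₂.edgeSet |
            (some (Sum.inl u) : Option (Fin k ⊕ Fin k)) ∈ e} := by
          by_contra h
          exact he ⟨fun h' => absurd h' heL, fun h' => absurd h' h⟩
        obtain ⟨b, rfl⟩ := hIustr e heI
        refine ⟨b, Or.inl ⟨heI.1, ?_⟩⟩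
        rintro (h | h)
        · exact heL h
        · exact hUnone b (Set.eq_of_mem_singleton h).symm
    obtain ⟨b, hb⟩ := hkey
    obtain ⟨C⟩ := hcol
    have adj1 : (SimpleGraph.fromEdgeSet
        (symmDiff G₂.edgeSet (L ∪ {s(some (Sum.inl u), none)}))).Adj
        (some (Sum.inl u)) (some (Sum.inr b)) := by
      rw [SimpleGraph.fromEdgeSet_adj]
      exact ⟨hb, by simp⟩
    have adj2 : (SimpleGraph.fromEdgeSet
        (symmDiff G₂.edgeSet (L ∪ {s(some (Sum.inl u), none)}))).Adj
        none (some (Sum.inr b)) := by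
      rw [SimpleGraph.fromEdgeSet_adj]
      refine ⟨Or.inl ⟨G₂.mem_edgeSet.mpr (hstar₂ b), ?_⟩, by simp⟩
      rintro (h | h)
      · obtain ⟨b', hb'⟩ := hL _ h
        rw [Sym2.eq_iff] at hb'
        simp at hb'
      · rw [Set.mem_singleton_iff, Sym2.eq_iff] at h
        simp at h
    have adj3 : (SimpleGraph.fromEdgeSet
        (symmDiff G₂.edgeSet (L ∪ {s(some (Sum.inl u), none)}))).Adj
        (some (Sum.inl u)) none := by
      rw [SimpleGraph.fromEdgeSet_adj]
      refine ⟨Or.inr ⟨Or.inr rfl, ?_⟩, by simp⟩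
      intro hE
      exact hstar₁ u (G₂.mem_edgeSet.mp hE).symm
    have d1 := C.valid adj1
    have d2 := C.valid adj2
    have d3 := C.valid adj3
    have h1 := (C (some (Sum.inl u))).isLt
    have h2 := (C (some (Sum.inr b))).isLt
    have h3 := (C none).isLt
    have e1 : (C (some (Sum.inl u))).val ≠ (C (some (Sum.inr b))).val :=
      fun h => d1 (Fin.val_injective h)
    have e2 : (C none).val ≠ (C (some (Sum.inr b))).val :=
      fun h => d2 (Fin.val_injective h)
    have e3 : (C (some (Sum.inl u))).val ≠ (C none).val :=
      fun h => d3 (Fin.val_injective h)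
    omega
  · -- backward
    rintro rfl
    refine ⟨SimpleGraph.Coloring.mk
      (fun x => match x with
        | none => 1
        | some (Sum.inl a) => if a = u then 0 else 1
        | some (Sum.inr _) => 0) ?_⟩
    intro x y hadj
    rw [SimpleGraph.fromEdgeSet_adj] at hadj
    obtain ⟨hmem, hne⟩ := hadj
    rcases hmem with ⟨hE, hS⟩ | ⟨hS, hE⟩
    · have hadj2 : G₂.Adj x y := G₂.mem_edgeSet.mp hE
      rcases x with _ | a | b <;> rcases y with _ | a' | b'
      · simp at hne
      · exact absurd hadj2 (hstar₁ a')
      · simp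
      · exact absurd hadj2.symm (hstar₁ a)
      · exact absurd hadj2 (h₁₁ a a')
      · by_cases ha : a = u
        · subst ha
          exact absurd (Or.inl ⟨hE, by simp⟩) hS
        · simp [ha]
      · simp
      · by_cases ha : a' = u
        · subst ha
          exact absurd (Or.inl ⟨hE, by simp⟩) hS
        · simp [ha]
      · exact absurd hadj2 (h₂₂ b b')
    · rcases hS with hLmem | hsing
      · exact absurd hLmem.1 hE
      · rw [Set.mem_singleton_iff] at hsing
        rw [Sym2.eq_iff] at hsing
        rcases hsing with ⟨rfl, rfl⟩ | ⟨rfl, rfl⟩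
        · simp
        · simp
end

section
/- In the bipartiteness reduction setting, if L ≠ I(u), then G'₃ contains a triangle (and hence an odd cycle), so G'₃ is not bipartite. -/
/-- In the bipartiteness reduction setting, if `L ≠ I(u)` then the
graph `G₃` obtained by XOR-ing the edges of `G₂` with `L ∪ {(u, v*)}` contains a
triangle, and hence is not bipartite. (Vertices are encoded as
`Option (Fin k ⊕ Fin k)` with `v* = none`, `S₁` the left summand and `S₂` the
right summand.) -/
theorem xor_not_bipartite_of_ne (k : ℕ)
    (G₂ : SimpleGraph (Option (Fin k ⊕ Fin k)))
    (hstar₂ : ∀ b : Fin k, G₂.Adj none (some (Sum.inr b)))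
    (hstar₁ : ∀ a : Fin k, ¬ G₂.Adj none (some (Sum.inl a)))
    (h₁₁ : ∀ a a' : Fin k, ¬ G₂.Adj (some (Sum.inl a)) (some (Sum.inl a')))
    (h₂₂ : ∀ b b' : Fin k, ¬ G₂.Adj (some (Sum.inr b)) (some (Sum.inr b')))
    (u : Fin k)
    (L : Set (Sym2 (Option (Fin k ⊕ Fin k))))
    (hL : ∀ e ∈ L, ∃ b : Fin k, e = s(some (Sum.inl u), some (Sum.inr b)))
    (hne : L ≠ {e ∈ G₂.edgeSet | (some (Sum.inl u) : Option (Fin k ⊕ Fin k)) ∈ e}) :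
    letI G₃ := SimpleGraph.fromEdgeSet
      (symmDiff G₂.edgeSet (L ∪ {s(some (Sum.inl u), none)}))
    (∃ x y z : Option (Fin k ⊕ Fin k),
        G₃.Adj x y ∧ G₃.Adj y z ∧ G₃.Adj z x) ∧ ¬ G₃.Colorable 2 := by
  classical
  set G₃ := SimpleGraph.fromEdgeSet (symmDiff G₂.edgeSet (L ∪ {s(some (Sum.inl u), none)})) with hG₃
  set U : Option (Fin k ⊕ Fin k) := some (Sum.inl u) with hU
  -- find b with s(U, inr b) in the symmetric difference
  obtain ⟨e, he⟩ : ∃ e, ¬ (e ∈ L ↔ e ∈ {e ∈ G₂.edgeSet | U ∈ e}) := by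
    by_contra h
    push_neg at h
    exact hne (Set.ext fun e => h e)
  have hb : ∃ b : Fin k,
      s(U, some (Sum.inr b)) ∈ symmDiff G₂.edgeSet (L ∪ {s(U, none)}) := by
    by_cases heL : e ∈ L
    · obtain ⟨b, rfl⟩ := hL e heL
      refine ⟨b, Or.inr ⟨Or.inl heL, ?_⟩⟩
      intro hmem
      exact he ⟨fun _ => ⟨hmem, by simp⟩, fun _ => heL⟩
    · have heR : e ∈ G₂.edgeSet ∧ U ∈ e := by
        by_contra h'
        exact he ⟨fun h'' => absurd h'' heL, fun h'' => absurd h'' h'⟩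
      obtain ⟨hE, hUe⟩ := heR
      have hspec := Sym2.other_spec hUe
      have hadj : G₂.Adj U (Sym2.Mem.other hUe) := by
        rw [← SimpleGraph.mem_edgeSet, hspec]; exact hE
      match hv : Sym2.Mem.other hUe with
      | none => rw [hv] at hadj; exact absurd hadj.symm (hstar₁ u)
      | some (Sum.inl a) => rw [hv] at hadj; exact absurd hadj (h₁₁ u a)
      | some (Sum.inr b) =>
        refine ⟨b, Or.inl ⟨by rw [← hv, hspec]; exact hE, ?_⟩⟩
        rintro (h' | h')
        · rw [← hv, hspec] at h'; exact heL h'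
        · simp only [Set.mem_singleton_iff, Sym2.eq_iff] at h'
          rcases h' with ⟨_, h'⟩ | ⟨h', _⟩ <;> simp [hU] at h'
  obtain ⟨b, hb⟩ := hb
  have hUb : U ≠ some (Sum.inr b) := by simp [hU]
  have e1 : G₃.Adj U (some (Sum.inr b)) :=
    (SimpleGraph.fromEdgeSet_adj _).2 ⟨hb, hUb⟩
  have e2 : G₃.Adj (some (Sum.inr b)) none := by
    refine (SimpleGraph.fromEdgeSet_adj _).2 ⟨Or.inl ⟨?_, ?_⟩, by simp⟩
    · rw [Sym2.eq_swap]; exact (hstar₂ b)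
    · rintro (h' | h')
      · obtain ⟨b', hb'⟩ := hL _ h'
        simp [Sym2.eq_iff, hU] at hb'
      · simp only [Set.mem_singleton_iff, Sym2.eq_iff] at h'
        rcases h' with ⟨h', _⟩ | ⟨_, h'⟩ <;> simp [hU] at h'
  have e3 : G₃.Adj none U := by
    refine (SimpleGraph.fromEdgeSet_adj _).2 ⟨Or.inr ⟨Or.inr ?_, ?_⟩, by simp [hU]⟩
    · rw [Sym2.eq_swap]; rfl
    · rw [Sym2.eq_swap, SimpleGraph.mem_edgeSet]
      intro h'; exact hstar₁ u h'.symm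
  refine ⟨⟨U, some (Sum.inr b), none, e1, e2, e3⟩, ?_⟩
  rintro ⟨C⟩
  have h1 := C.valid e1
  have h2 := C.valid e2
  have h3 := C.valid e3
  have l1 := (C U).isLt
  have l2 := (C (some (Sum.inr b))).isLt
  have l3 := (C none).isLt
  simp only [Ne, Fin.ext_iff] at h1 h2 h3
  omega
end
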